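/- Let N ≥ 1 and let a₁, …, a_N be positive real numbers. Define the numbers M_{2k} ≥ 0 by the everywhere-convergent expansion ∏_{i=1}^N I₀(a_i s) = ∑_{k≥0} M_{2k} s^{2k}/(2k)!, and set B₁ = (1/4)∑_{i=1}^N a_i² and M⁽⁰⁾_{2k} = (2k)!·B₁^k / k!. Then the ratios M_{2k}/M⁽⁰⁾_{2k} satisfy M_{2(k+1)}/M⁽⁰⁾_{2(k+1)} < M_{2k}/M⁽⁰⁾_{2k} for every integer k ≥ 1, and M_{2k}/M⁽⁰⁾_{2k} → 0 as k → ∞. -/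

import Mathlib

open Real

/-- The modified Bessel function of the first kind of order zero,
`I0(w) = sum_k w^(2k) / (4^k (k!)^2)`. -/
noncomputable def besselI0 (w : ℝ) : ℝ :=
  ∑' k : ℕ, w ^ (2 * k) / (4 ^ k * (k.factorial : ℝ) ^ 2)

/-- The modified Bessel function of the first kind of order one (the derivative of `besselI0`),
`I1(w) = sum_k w^(2k+1) / (2^(2k+1) k! (k+1)!)`. -/
noncomputable def besselI1 (w : ℝ) : ℝ :=
  ∑' k : ℕ, w ^ (2 * k + 1) / (2 ^ (2 * k + 1) * (k.factorial : ℝ) * ((k + 1).factorial : ℝ))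



open Finset in
lemma aux_hasSum_prod {ι : Type*} [DecidableEq ι] (f : ι → ℕ → ℝ)
    (h0 : ∀ i k, 0 ≤ f i k) (F : ι → ℝ) :
    ∀ (S : Finset ι), (∀ i ∈ S, HasSum (f i) (F i)) →
      HasSum (fun k : ℕ => ∑ t ∈ S.piAntidiag k, ∏ i ∈ S, f i (t i)) (∏ i ∈ S, F i) := by
  intro S
  induction S using Finset.cons_induction with
  | empty =>
    intro _
    have he : (fun k : ℕ => ∑ t ∈ piAntidiag (∅ : Finset ι) k, ∏ i ∈ (∅ : Finset ι), f i (t i))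
        = fun k : ℕ => if k = 0 then (1:ℝ) else 0 := by
      funext k
      rcases eq_or_ne k 0 with rfl | hk
      · simp [piAntidiag_empty]
      · simp [piAntidiag_empty, hk]
    rw [he, prod_empty]
    exact hasSum_ite_eq 0 1
  | cons a S ha ih =>
    intro hS
    have hfa : HasSum (f a) (F a) := hS a (mem_cons_self a S)
    have hg : HasSum (fun k : ℕ => ∑ t ∈ S.piAntidiag k, ∏ i ∈ S, f i (t i)) (∏ i ∈ S, F i) :=
      ih fun i hi => hS i (mem_cons_of_mem hi)
    set g : ℕ → ℝ := fun k => ∑ t ∈ S.piAntidiag k, ∏ i ∈ S, f i (t i) with hgdef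
    have hg0 : ∀ k, 0 ≤ g k := fun k => sum_nonneg fun t _ => prod_nonneg fun i _ => h0 i (t i)
    have hfan : Summable fun k => ‖f a k‖ := by
      simpa [Real.norm_eq_abs, abs_of_nonneg (h0 a _)] using hfa.summable
    have hgn : Summable fun k => ‖g k‖ := by
      simpa [Real.norm_eq_abs, abs_of_nonneg (hg0 _)] using hg.summable
    have hsum : Summable fun n => ∑ kl ∈ Finset.HasAntidiagonal.antidiagonal n, f a kl.1 * g kl.2 :=
      (summable_norm_sum_mul_antidiagonal_of_summable_norm hfan hgn).of_norm
    have htsum : ((∑' n, f a n) * ∑' n, g n)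
        = ∑' n, ∑ kl ∈ Finset.HasAntidiagonal.antidiagonal n, f a kl.1 * g kl.2 :=
      tsum_mul_tsum_eq_tsum_sum_antidiagonal_of_summable_norm hfan hgn
    have hc : HasSum (fun n => ∑ kl ∈ Finset.HasAntidiagonal.antidiagonal n, f a kl.1 * g kl.2)
        (F a * ∏ i ∈ S, F i) := by
      have h1 := hsum.hasSum
      rwa [← htsum, hfa.tsum_eq, hg.tsum_eq] at h1
    have hre : (fun n : ℕ => ∑ kl ∈ Finset.HasAntidiagonal.antidiagonal n, f a kl.1 * g kl.2)
        = fun n : ℕ => ∑ t ∈ (cons a S ha).piAntidiag n, ∏ i ∈ cons a S ha, f i (t i) := by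
      funext n
      rw [piAntidiag_cons ha n, sum_disjiUnion]
      refine Finset.sum_congr rfl fun p hp => ?_
      rw [sum_map, hgdef, Finset.mul_sum]
      refine Finset.sum_congr rfl fun t ht => ?_
      have hta : t a = 0 := by
        by_contra h
        exact ha ((mem_piAntidiag.mp ht).2 a h)
      rw [prod_cons]
      congr 1
      · simp [addRightEmbedding_apply, hta]
      · refine Finset.prod_congr rfl fun i hi => ?_
        have hia : i ≠ a := fun h => ha (h ▸ hi)
        simp [addRightEmbedding_apply, hia]
    rw [prod_cons]
    rw [hre] at hc
    exact hc

lemma aux_coeff_zero (e : ℕ → ℝ) (h : ∀ x : ℝ, HasSum (fun n => e n * x ^ n) 0) :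
    ∀ n, e n = 0 := by
  have hse : Summable fun n => |e n| := by
    have h1 := (h 1).summable
    simp only [one_pow, mul_one] at h1
    exact h1.abs
  intro n
  induction n using Nat.strong_induction_on with
  | _ n ih =>
  set A := ∑' k, |e (k + (n + 1))| with hA
  have hsA : Summable fun k => |e (k + (n + 1))| :=
    (summable_nat_add_iff (f := fun n => |e n|) (n+1)).2 hse
  have hA0 : 0 ≤ A := tsum_nonneg fun _ => abs_nonneg _
  have key : ∀ x : ℝ, 0 < x → x ≤ 1 → |e n| ≤ x * A := by
    intro x hx hx1
    have hs := (h x).summable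
    have h0 : ∑ k ∈ Finset.range (n + 1), e k * x ^ k
        + ∑' k, e (k + (n+1)) * x ^ (k + (n+1)) = 0 := by
      rw [Summable.sum_add_tsum_nat_add (n+1) hs, (h x).tsum_eq]
    have hfin : ∑ k ∈ Finset.range (n + 1), e k * x ^ k = e n * x ^ n := by
      rw [Finset.sum_range_succ]
      have hz : ∑ k ∈ Finset.range n, e k * x ^ k = 0 :=
        Finset.sum_eq_zero fun k hk => by rw [ih k (Finset.mem_range.mp hk), zero_mul]
      rw [hz, zero_add]
    have hT : e n * x ^ n = -(∑' k, e (k + (n+1)) * x ^ (k + (n+1))) := by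
      rw [hfin] at h0; linarith
    have hsT : Summable fun k => e (k + (n+1)) * x ^ (k + (n+1)) :=
      (summable_nat_add_iff (f := fun k => e k * x ^ k) (n+1)).2 hs
    have hbound : |∑' k, e (k + (n+1)) * x ^ (k + (n+1))| ≤ A * x ^ (n+1) := by
      have h1 : |∑' k, e (k + (n+1)) * x ^ (k + (n+1))|
          ≤ ∑' k, |e (k + (n+1)) * x ^ (k + (n+1))| := by
        simpa only [Real.norm_eq_abs] using
          norm_tsum_le_tsum_norm (f := fun k => e (k + (n+1)) * x ^ (k + (n+1)))
            (by simpa only [Real.norm_eq_abs] using hsT.abs)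
      refine h1.trans ?_
      have h2 : ∑' k, |e (k + (n+1)) * x ^ (k + (n+1))|
          ≤ ∑' k, |e (k + (n+1))| * x ^ (n+1) := by
        refine hsT.abs.tsum_le_tsum (fun k => ?_) (hsA.mul_right _)
        rw [abs_mul, abs_of_nonneg (pow_nonneg hx.le _)]
        have hxx : x ^ (k + (n+1)) ≤ x ^ (n+1) :=
          pow_le_pow_of_le_one hx.le hx1 (Nat.le_add_left _ _)
        exact mul_le_mul_of_nonneg_left hxx (abs_nonneg _)
      rw [tsum_mul_right] at h2
      exact h2
    have hxn : 0 < x ^ n := pow_pos hx n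
    have h3 : |e n| * x ^ n ≤ (x * A) * x ^ n := by
      have hc : |e n| * x ^ n = |∑' k, e (k + (n+1)) * x ^ (k + (n+1))| := by
        rw [← abs_of_nonneg hxn.le, ← abs_mul, hT, abs_neg]
      have : A * x ^ (n+1) = (x * A) * x ^ n := by ring
      rw [hc]
      calc |∑' k, e (k + (n+1)) * x ^ (k + (n+1))| ≤ A * x ^ (n+1) := hbound
        _ = (x * A) * x ^ n := by ring
    exact le_of_mul_le_mul_right h3 hxn
  have h4 : |e n| ≤ 0 := by
    refine le_of_forall_pos_le_add ?_
    intro ε hε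
    have hxpos : 0 < min 1 (ε / (A + 1)) := lt_min one_pos (div_pos hε (by linarith))
    have hk := key _ hxpos (min_le_left _ _)
    have hle : min 1 (ε / (A + 1)) * A ≤ ε := by
      have h5 : min 1 (ε/(A+1)) ≤ ε / (A+1) := min_le_right _ _
      have h6 : min 1 (ε/(A+1)) * A ≤ (ε/(A+1)) * A := mul_le_mul_of_nonneg_right h5 hA0
      have h7 : (ε/(A+1)) * A ≤ ε := by
        rw [div_mul_eq_mul_div, div_le_iff₀ (by linarith)]
        nlinarith
      linarith
    linarith
  exact abs_eq_zero.mp (le_antisymm h4 (abs_nonneg _))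

lemma aux_even_coeff_zero (d : ℕ → ℝ)
    (h : ∀ x : ℝ, HasSum (fun k => d k * x ^ (2 * k)) 0) : ∀ k, d k = 0 := by
  classical
  set e : ℕ → ℝ := fun n => if n % 2 = 0 then d (n / 2) else 0 with he
  have hinj : Function.Injective fun k : ℕ => 2 * k := fun a b hab => by
    simpa using hab
  have he2 : ∀ k, e (2 * k) = d k := fun k => by
    simp [he, Nat.mul_div_cancel_left k (by norm_num : 0 < 2), Nat.mul_mod_right]
  have hE : ∀ x : ℝ, HasSum (fun n => e n * x ^ n) 0 := by
    intro x
    refine (hinj.hasSum_iff ?_).mp ?_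
    · intro n hn
      have hodd : n % 2 ≠ 0 := by
        intro h2
        exact hn ⟨n / 2, show 2 * (n / 2) = n by omega⟩
      simp [he, hodd]
    · have hcomp : ((fun n => e n * x ^ n) ∘ fun k : ℕ => 2 * k)
          = fun k => d k * x ^ (2 * k) := by
        funext k; simp [Function.comp, he2]
      rw [hcomp]; exact h x
  intro k
  have h2 := aux_coeff_zero e hE (2 * k)
  rwa [he2] at h2

open Finset in
lemma aux_reindex {N : ℕ} (x : Fin N → ℝ) (i : Fin N) (k : ℕ) :
    ∑ t ∈ piAntidiag (univ : Finset (Fin N)) (k+1),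
        (t i : ℝ) * ∏ j, x j ^ t j / (((t j).factorial : ℝ))^2
    = ∑ s ∈ piAntidiag (univ : Finset (Fin N)) k,
        (x i / ((s i : ℝ) + 1)) * ∏ j, x j ^ s j / (((s j).factorial : ℝ))^2 := by
  classical
  have hupd : ∀ (s : Fin N → ℕ) (v : ℕ),
      (∏ j, x j ^ (Function.update s i v j) / (((Function.update s i v j).factorial : ℝ))^2)
      = (x i ^ v / ((v.factorial : ℝ))^2)
        * ∏ j ∈ univ.erase i, x j ^ s j / (((s j).factorial : ℝ))^2 := by
    intro s v
    rw [← Finset.mul_prod_erase univ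
      (fun j => x j ^ (Function.update s i v j) / (((Function.update s i v j).factorial : ℝ))^2)
      (mem_univ i)]
    congr 1
    · simp
    · exact Finset.prod_congr rfl fun j hj => by
        rw [Function.update_of_ne (Finset.ne_of_mem_erase hj)]
  rw [← Finset.sum_filter_of_ne
    (p := fun t : Fin N → ℕ => t i ≠ 0)
    (fun t _ hft hti => hft (by rw [hti, Nat.cast_zero, zero_mul]))]
  symm
  refine Finset.sum_bij' (fun s _ => Function.update s i (s i + 1))
      (fun t _ => Function.update t i (t i - 1)) ?_ ?_ ?_ ?_ ?_
  · intro s hs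
    rw [mem_piAntidiag] at hs
    obtain ⟨hs1, -⟩ := hs
    rw [mem_filter, mem_piAntidiag]
    have h1 : s i + ∑ j ∈ univ.erase i, s j = ∑ j, s j :=
      Finset.add_sum_erase univ s (mem_univ i)
    have h2 : ∑ j, Function.update s i (s i + 1) j
        = (s i + 1) + ∑ j ∈ univ \ {i}, s j := Finset.sum_update_of_mem (mem_univ i) s (s i + 1)
    rw [← Finset.erase_eq] at h2
    have h3 : ∑ j, s j = k := hs1
    refine ⟨⟨by rw [h2]; omega, fun j _ => mem_univ j⟩, by simp⟩
  · intro t ht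
    rw [mem_filter, mem_piAntidiag] at ht
    obtain ⟨⟨hsum, -⟩, hti⟩ := ht
    rw [mem_piAntidiag]
    have h1 : t i + ∑ j ∈ univ.erase i, t j = ∑ j, t j :=
      Finset.add_sum_erase univ t (mem_univ i)
    have h2 : ∑ j, Function.update t i (t i - 1) j
        = (t i - 1) + ∑ j ∈ univ \ {i}, t j := Finset.sum_update_of_mem (mem_univ i) t (t i - 1)
    rw [← Finset.erase_eq] at h2
    have h3 : ∑ j, t j = k + 1 := hsum
    refine ⟨by rw [h2]; omega, fun j _ => mem_univ j⟩
  · intro s _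
    simp [Function.update_idem]
  · intro t ht
    rw [mem_filter] at ht
    have hti : t i ≠ 0 := ht.2
    simp only [Function.update_idem, Function.update_self]
    rw [show t i - 1 + 1 = t i by omega]
    simp
  · intro s hs
    simp only [Function.update_self]
    rw [hupd s (s i + 1)]
    have hws : (∏ j, x j ^ s j / (((s j).factorial : ℝ))^2)
        = (x i ^ (s i) / (((s i).factorial : ℝ))^2)
          * ∏ j ∈ univ.erase i, x j ^ s j / (((s j).factorial : ℝ))^2 :=
      (Finset.mul_prod_erase univ _ (mem_univ i)).symm
    rw [hws]
    set n := s i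
    have hfac : (((n+1).factorial : ℕ) : ℝ) = ((n:ℝ)+1) * ((n.factorial : ℕ) : ℝ) := by
      rw [Nat.factorial_succ]; push_cast; ring
    have hne : ((n:ℝ)+1) ≠ 0 := by positivity
    have hfne : ((n.factorial : ℕ) : ℝ) ≠ 0 := Nat.cast_ne_zero.2 n.factorial_ne_zero
    push_cast [hfac]
    field_simp
    ring

set_option maxHeartbeats 1600000 in
open Finset in
/-- Lemma 1 of the paper, for a finite product of Bessel factors: with
`∏ i, I0 (a i * s) = ∑_k M_{2k} s^(2k)/(2k)!`, `B₁ = (1/4) ∑ a i ^ 2` and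
`M⁰_{2k} = (2k)! B₁^k / k!` (the moments of a normal distribution of variance `2B₁`),
the ratios `M_{2k}/M⁰_{2k}` are strictly decreasing for `k ≥ 1` and tend to `0`. -/
theorem moment_ratios_decreasing_tendsto_zero (N : ℕ) (hN : 1 ≤ N)
    (a : Fin N → ℝ) (ha : ∀ i, 0 < a i)
    (M : ℕ → ℝ)
    (hM : ∀ s : ℝ, HasSum (fun k : ℕ => M k * s ^ (2 * k) / ((2 * k).factorial : ℝ))
      (∏ i, besselI0 (a i * s)))
    (B₁ : ℝ) (hB₁ : B₁ = (1 / 4) * ∑ i, (a i) ^ 2)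
    (M₀ : ℕ → ℝ) (hM₀ : ∀ k, M₀ k = ((2 * k).factorial : ℝ) * B₁ ^ k / (k.factorial : ℝ)) :
    (∀ k : ℕ, 1 ≤ k → M (k + 1) / M₀ (k + 1) < M k / M₀ k) ∧
    Filter.Tendsto (fun k : ℕ => M k / M₀ k) Filter.atTop (nhds 0) := by
  classical
  have hN0 : 0 < N := hN
  haveI : Nonempty (Fin N) := ⟨⟨0, hN0⟩⟩
  have hNR : (1:ℝ) ≤ (N:ℝ) := by exact_mod_cast hN
  obtain ⟨x, hxdef⟩ : ∃ x : Fin N → ℝ, ∀ i, x i = (a i) ^ 2 / 4 := ⟨_, fun _ => rfl⟩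
  have hx : ∀ i, 0 < x i := fun i => by
    have h := ha i
    rw [hxdef i]
    positivity
  obtain ⟨w, hwt⟩ : ∃ w : (Fin N → ℕ) → ℝ,
      ∀ t, w t = ∏ j, x j ^ t j / (((t j).factorial : ℝ)) ^ 2 := ⟨_, fun _ => rfl⟩
  have hw0 : ∀ t, 0 ≤ w t := fun t => by
    rw [hwt]
    exact Finset.prod_nonneg fun j _ => by
      have := (hx j).le
      positivity
  obtain ⟨c, hck⟩ : ∃ c : ℕ → ℝ,
      ∀ k, c k = ∑ t ∈ Finset.piAntidiag Finset.univ k, w t := ⟨_, fun _ => rfl⟩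
  have hBx : B₁ = ∑ i, x i := by
    rw [hB₁, Finset.mul_sum]
    exact Finset.sum_congr rfl fun i _ => by rw [hxdef i]; ring
  have hB_pos : 0 < B₁ := by
    rw [hBx]; exact Finset.sum_pos (fun i _ => hx i) Finset.univ_nonempty
  -- Step 1: power series of the product
  have hC : ∀ s : ℝ, HasSum (fun k => c k * s ^ (2 * k)) (∏ i, besselI0 (a i * s)) := by
    intro s
    obtain ⟨f, hfk⟩ : ∃ f : Fin N → ℕ → ℝ,
        ∀ i k, f i k = (x i * s ^ 2) ^ k / ((k.factorial : ℝ)) ^ 2 := ⟨_, fun _ _ => rfl⟩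
    have hf0 : ∀ i k, 0 ≤ f i k := fun i k => by
      have h1 := (hx i).le
      have h2 : (0:ℝ) ≤ s ^ 2 := sq_nonneg s
      rw [hfk]
      positivity
    have hbessel : ∀ i : Fin N, HasSum (f i) (besselI0 (a i * s)) := by
      intro i
      have hsummable : Summable (f i) := by
        refine Summable.of_nonneg_of_le (hf0 i) (fun k => ?_)
          (Real.summable_pow_div_factorial (x i * s ^ 2))
        have h1 : (1:ℝ) ≤ (k.factorial : ℝ) := by exact_mod_cast k.factorial_pos
        have h3 : (0:ℝ) < (k.factorial : ℝ) := by linarith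
        have hy : (0:ℝ) ≤ (x i * s ^ 2) ^ k := by
          have := (hx i).le
          have h2 : (0:ℝ) ≤ s ^ 2 := sq_nonneg s
          positivity
        rw [hfk]
        have h2 : (k.factorial : ℝ) ≤ ((k.factorial : ℝ)) ^ 2 := by nlinarith
        exact div_le_div_of_nonneg_left hy h3 h2
      have heq : besselI0 (a i * s) = ∑' k, f i k := by
        rw [besselI0]
        refine tsum_congr fun k => ?_
        rw [hfk]
        have hxi : x i * s ^ 2 = (a i * s) ^ 2 / 4 := by
          rw [hxdef i]; ring
        rw [hxi, div_pow, pow_mul]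
        ring
      rw [heq]
      exact hsummable.hasSum
    have hprod := aux_hasSum_prod f hf0 (fun i => besselI0 (a i * s)) Finset.univ
      (fun i _ => hbessel i)
    have hcongr : (fun k : ℕ => ∑ t ∈ Finset.piAntidiag Finset.univ k, ∏ i, f i (t i))
        = fun k => c k * s ^ (2 * k) := by
      funext k
      rw [hck, Finset.sum_mul]
      refine Finset.sum_congr rfl fun t ht => ?_
      have hsum : ∑ i, t i = k := (Finset.mem_piAntidiag.mp ht).1
      rw [hwt]
      calc ∏ i, f i (t i)
          = ∏ i, (x i ^ t i / (((t i).factorial : ℝ)) ^ 2) * (s ^ 2) ^ t i := by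
            refine Finset.prod_congr rfl fun i _ => ?_
            rw [hfk, mul_pow]; ring
        _ = (∏ i, x i ^ t i / (((t i).factorial : ℝ)) ^ 2) * ∏ i, (s ^ 2) ^ t i :=
            Finset.prod_mul_distrib
        _ = (∏ i, x i ^ t i / (((t i).factorial : ℝ)) ^ 2) * s ^ (2 * k) := by
            congr 1
            rw [Finset.prod_pow_eq_pow_sum, hsum, ← pow_mul]
    rw [← hcongr]
    exact hprod
  -- Step 2: identify the coefficients
  have hMc : ∀ k, M k = ((2 * k).factorial : ℝ) * c k := by
    have hD : ∀ s : ℝ, HasSum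
        (fun k => (M k / ((2 * k).factorial : ℝ) - c k) * s ^ (2 * k)) 0 := by
      intro s
      have h1 := (hM s).sub (hC s)
      rw [sub_self] at h1
      have h2 : (fun k => M k * s ^ (2 * k) / ((2 * k).factorial : ℝ) - c k * s ^ (2 * k))
          = fun k => (M k / ((2 * k).factorial : ℝ) - c k) * s ^ (2 * k) := by
        funext k; ring
      rwa [h2] at h1
    have h0 := aux_even_coeff_zero _ hD
    intro k
    have h1 := h0 k
    have hfne : ((2 * k).factorial : ℝ) ≠ 0 := Nat.cast_ne_zero.2 (Nat.factorial_ne_zero _)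
    have h3 := sub_eq_zero.mp h1
    rw [div_eq_iff hfne] at h3
    rw [h3]; ring
  -- positivity of c
  have hc_pos : ∀ k, 0 < c k := by
    intro k
    set i₀ : Fin N := ⟨0, hN0⟩ with hi₀
    have hmem : (fun j : Fin N => if j = i₀ then k else 0) ∈
        Finset.piAntidiag (Finset.univ : Finset (Fin N)) k := by
      rw [Finset.mem_piAntidiag]
      refine ⟨?_, fun j _ => Finset.mem_univ j⟩
      simp
    have hwp : 0 < w (fun j => if j = i₀ then k else 0) := by
      rw [hwt]
      refine Finset.prod_pos fun j _ => ?_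
      have := hx j
      positivity
    have hle : w (fun j => if j = i₀ then k else 0) ≤ c k := by
      rw [hck]
      exact Finset.single_le_sum (fun t _ => hw0 t) hmem
    linarith
  -- minimum of the x i
  have hex : (Finset.univ : Finset (Fin N)).Nonempty := Finset.univ_nonempty
  set m : ℝ := Finset.univ.inf' hex x with hmdef
  have hm_le : ∀ i, m ≤ x i := fun i => Finset.inf'_le x (Finset.mem_univ i)
  have hm_pos : 0 < m := by
    obtain ⟨i₁, -, hi₁⟩ := Finset.exists_mem_eq_inf' hex x
    have h1 : m = x i₁ := hi₁
    rw [h1]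
    exact hx i₁
  have hmB : m ≤ B₁ := by
    obtain ⟨i₁, -, hi₁⟩ := Finset.exists_mem_eq_inf' hex x
    have h1 : m = x i₁ := hi₁
    rw [h1, hBx]
    exact Finset.single_le_sum (fun i _ => (hx i).le) (Finset.mem_univ i₁)
  -- the key inequality
  have hkey : ∀ k : ℕ, ((k:ℝ) + 1) * c (k + 1) ≤ (B₁ - m * k / ((k:ℝ) + N)) * c k := by
    intro k
    have hkN : (0:ℝ) < (k:ℝ) + N := by
      have h1 : (0:ℝ) ≤ (k:ℝ) := Nat.cast_nonneg k
      linarith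
    have hA : ((k:ℝ) + 1) * c (k + 1)
        = ∑ s ∈ Finset.piAntidiag (Finset.univ : Finset (Fin N)) k,
            (∑ i, x i / ((s i : ℝ) + 1)) * w s := by
      rw [hck, Finset.mul_sum]
      calc ∑ t ∈ Finset.piAntidiag Finset.univ (k+1), ((k:ℝ) + 1) * w t
          = ∑ t ∈ Finset.piAntidiag Finset.univ (k+1), ∑ i, (t i : ℝ) * w t := by
            refine Finset.sum_congr rfl fun t ht => ?_
            have h1 : ∑ i, t i = k + 1 := (Finset.mem_piAntidiag.mp ht).1
            rw [← Finset.sum_mul]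
            congr 1
            rw [← Nat.cast_sum, h1]
            push_cast; ring
        _ = ∑ i, ∑ t ∈ Finset.piAntidiag Finset.univ (k+1), (t i : ℝ) * w t :=
            Finset.sum_comm
        _ = ∑ i, ∑ s ∈ Finset.piAntidiag Finset.univ k, (x i / ((s i : ℝ) + 1)) * w s := by
            refine Finset.sum_congr rfl fun i _ => ?_
            simp only [hwt]
            exact aux_reindex x i k
        _ = ∑ s ∈ Finset.piAntidiag Finset.univ k, ∑ i, (x i / ((s i : ℝ) + 1)) * w s :=
            Finset.sum_comm
        _ = ∑ s ∈ Finset.piAntidiag Finset.univ k, (∑ i, x i / ((s i : ℝ) + 1)) * w s := by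
            refine Finset.sum_congr rfl fun s _ => ?_
            rw [Finset.sum_mul]
    rw [hA]
    have hper : ∀ s ∈ Finset.piAntidiag (Finset.univ : Finset (Fin N)) k,
        (∑ i, x i / ((s i : ℝ) + 1)) ≤ B₁ - m * k / ((k:ℝ) + N) := by
      intro s hs
      have hsumk : ∑ i, s i = k := (Finset.mem_piAntidiag.mp hs).1
      have hj : ∃ j : Fin N, k ≤ N * s j := by
        by_contra hcon
        push_neg at hcon
        have h6 : ∑ i : Fin N, N * s i < ∑ _i : Fin N, k :=
          Finset.sum_lt_sum_of_nonempty hex fun j _ => hcon j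
        rw [← Finset.mul_sum, hsumk, Finset.sum_const, Finset.card_univ, Fintype.card_fin,
          smul_eq_mul] at h6
        exact lt_irrefl _ h6
      obtain ⟨j, hj⟩ := hj
      have hjR : (k:ℝ) ≤ (N:ℝ) * (s j : ℝ) := by exact_mod_cast hj
      have hterm : x j / ((s j : ℝ) + 1) ≤ x j * N / ((k:ℝ) + N) := by
        rw [div_le_div_iff₀ (by positivity) hkN]
        have h7 : (k:ℝ) + N ≤ (N:ℝ) * ((s j : ℝ) + 1) := by
          rw [mul_add, mul_one]; linarith
        nlinarith [(hx j).le]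
      have hsplit : ∑ i, x i / ((s i : ℝ) + 1)
          = x j / ((s j : ℝ) + 1) + ∑ i ∈ Finset.univ.erase j, x i / ((s i : ℝ) + 1) :=
        (Finset.add_sum_erase _ _ (Finset.mem_univ j)).symm
      have hrest : ∑ i ∈ Finset.univ.erase j, x i / ((s i : ℝ) + 1)
          ≤ ∑ i ∈ Finset.univ.erase j, x i :=
        Finset.sum_le_sum fun i _ => by
          have h8 : (1:ℝ) ≤ (s i : ℝ) + 1 := by
            have h9 : (0:ℝ) ≤ (s i : ℝ) := Nat.cast_nonneg _
            linarith
          exact div_le_self (hx i).le h8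
      have hBsplit : ∑ i ∈ Finset.univ.erase j, x i = B₁ - x j := by
        have h9 : x j + ∑ i ∈ Finset.univ.erase j, x i = ∑ i, x i :=
          Finset.add_sum_erase _ _ (Finset.mem_univ j)
        rw [hBx]; linarith
      have hxm : m ≤ x j := hm_le j
      have h11 : x j * N / ((k:ℝ) + N) - x j = -(x j * k / ((k:ℝ) + N)) := by
        field_simp
        ring
      have h12 : m * k / ((k:ℝ) + N) ≤ x j * k / ((k:ℝ) + N) := by
        have h13 : m * k ≤ x j * k := mul_le_mul_of_nonneg_right hxm (Nat.cast_nonneg k)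
        rw [div_le_div_iff₀ hkN hkN]
        nlinarith [mul_le_mul_of_nonneg_right h13 hkN.le]
      rw [hsplit]
      linarith [hterm, hrest, hBsplit]
    calc ∑ s ∈ Finset.piAntidiag (Finset.univ : Finset (Fin N)) k,
            (∑ i, x i / ((s i : ℝ) + 1)) * w s
        ≤ ∑ s ∈ Finset.piAntidiag (Finset.univ : Finset (Fin N)) k,
            (B₁ - m * k / ((k:ℝ) + N)) * w s :=
          Finset.sum_le_sum fun s hs => mul_le_mul_of_nonneg_right (hper s hs) (hw0 s)
      _ = (B₁ - m * k / ((k:ℝ) + N)) * c k := by rw [← Finset.mul_sum, hck]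
  -- ratios in closed form
  have hr : ∀ k, M k / M₀ k = c k * (k.factorial : ℝ) / B₁ ^ k := by
    intro k
    rw [hMc k, hM₀ k]
    have h1 : ((2 * k).factorial : ℝ) ≠ 0 := Nat.cast_ne_zero.2 (Nat.factorial_ne_zero _)
    have h2 : (k.factorial : ℝ) ≠ 0 := Nat.cast_ne_zero.2 (Nat.factorial_ne_zero _)
    have h3 : B₁ ^ k ≠ 0 := pow_ne_zero _ (ne_of_gt hB_pos)
    field_simp
  constructor
  · -- strict decrease
    intro k hk
    rw [hr (k+1), hr k]
    rw [div_lt_div_iff₀ (pow_pos hB_pos _) (pow_pos hB_pos _)]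
    have hk1 : (0:ℝ) < (k:ℝ) := by exact_mod_cast hk
    have hkN : (0:ℝ) < (k:ℝ) + N := by linarith
    have hlt : ((k:ℝ) + 1) * c (k + 1) < B₁ * c k := by
      refine lt_of_le_of_lt (hkey k) ?_
      have h1 : 0 < m * k / ((k:ℝ) + N) := div_pos (mul_pos hm_pos hk1) hkN
      nlinarith [mul_pos h1 (hc_pos k)]
    have hfs : (((k+1).factorial : ℕ) : ℝ) = ((k:ℝ) + 1) * (k.factorial : ℝ) := by
      rw [Nat.factorial_succ]; push_cast; ring
    have hfp : (0:ℝ) < (k.factorial : ℝ) := by exact_mod_cast k.factorial_pos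
    have hpos : (0:ℝ) < (k.factorial : ℝ) * B₁ ^ k := by positivity
    calc c (k+1) * ((k+1).factorial : ℝ) * B₁ ^ k
        = (((k:ℝ) + 1) * c (k + 1)) * ((k.factorial : ℝ) * B₁ ^ k) := by rw [hfs]; ring
      _ < (B₁ * c k) * ((k.factorial : ℝ) * B₁ ^ k) := mul_lt_mul_of_pos_right hlt hpos
      _ = c k * (k.factorial : ℝ) * B₁ ^ (k+1) := by rw [pow_succ]; ring
  · -- tendsto zero
    obtain ⟨q, hqdef⟩ : ∃ q : ℝ, q = 1 - m / (2 * B₁) := ⟨_, rfl⟩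
    have hq0 : 0 ≤ q := by
      rw [hqdef]
      have h1 : m / (2 * B₁) ≤ 1 / 2 := by
        rw [div_le_div_iff₀ (by positivity) (by norm_num)]
        linarith
      linarith
    have hq1 : q < 1 := by
      rw [hqdef]
      have h1 : 0 < m / (2 * B₁) := div_pos hm_pos (by linarith)
      linarith
    have hstep : ∀ k, N ≤ k →
        c (k+1) * ((k+1).factorial : ℝ) / B₁ ^ (k+1)
          ≤ q * (c k * (k.factorial : ℝ) / B₁ ^ k) := by
      intro k hNk
      have hkR : (N:ℝ) ≤ (k:ℝ) := by exact_mod_cast hNk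
      have hkN : (0:ℝ) < (k:ℝ) + N := by linarith
      have h2 : m / 2 ≤ m * k / ((k:ℝ) + N) := by
        rw [div_le_div_iff₀ (by norm_num) hkN]
        nlinarith [mul_nonneg hm_pos.le (sub_nonneg.mpr hkR)]
      have h3 : ((k:ℝ) + 1) * c (k + 1) ≤ (B₁ - m / 2) * c k := by
        refine le_trans (hkey k) ?_
        have h4 := hc_pos k
        nlinarith
      have hBq : B₁ - m / 2 = B₁ * q := by rw [hqdef]; field_simp
      have hfs : (((k+1).factorial : ℕ) : ℝ) = ((k:ℝ) + 1) * (k.factorial : ℝ) := by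
        rw [Nat.factorial_succ]; push_cast; ring
      have hfp : (0:ℝ) < (k.factorial : ℝ) := by exact_mod_cast k.factorial_pos
      have hpos : (0:ℝ) ≤ (k.factorial : ℝ) / (B₁ ^ k * B₁) := by positivity
      have h4 := mul_le_mul_of_nonneg_right h3 hpos
      have hBk : B₁ ^ k ≠ 0 := pow_ne_zero _ (ne_of_gt hB_pos)
      have hBne : B₁ ≠ 0 := ne_of_gt hB_pos
      calc c (k+1) * ((k+1).factorial : ℝ) / B₁ ^ (k+1)
          = (((k:ℝ) + 1) * c (k + 1)) * ((k.factorial : ℝ) / (B₁ ^ k * B₁)) := by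
            rw [hfs, pow_succ]; ring
        _ ≤ ((B₁ - m / 2) * c k) * ((k.factorial : ℝ) / (B₁ ^ k * B₁)) := h4
        _ = (B₁ * q * c k) * ((k.factorial : ℝ) / (B₁ ^ k * B₁)) := by rw [hBq]
        _ = q * (c k * (k.factorial : ℝ) / B₁ ^ k) := by
            field_simp
    have hgeo : ∀ j : ℕ, c (N+j) * ((N+j).factorial : ℝ) / B₁ ^ (N+j)
        ≤ q ^ j * (c N * (N.factorial : ℝ) / B₁ ^ N) := by
      intro j
      induction j with
      | zero => simp
      | succ j ihj =>
        have h1 := hstep (N+j) (Nat.le_add_right N j)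
        calc c (N+(j+1)) * ((N+(j+1)).factorial : ℝ) / B₁ ^ (N+(j+1))
            = c ((N+j)+1) * (((N+j)+1).factorial : ℝ) / B₁ ^ ((N+j)+1) := by
              norm_num [Nat.add_assoc]
          _ ≤ q * (c (N+j) * ((N+j).factorial : ℝ) / B₁ ^ (N+j)) := h1
          _ ≤ q * (q ^ j * (c N * (N.factorial : ℝ) / B₁ ^ N)) :=
              mul_le_mul_of_nonneg_left ihj hq0
          _ = q ^ (j+1) * (c N * (N.factorial : ℝ) / B₁ ^ N) := by rw [pow_succ]; ring
    have h0le : ∀ᶠ k in Filter.atTop, 0 ≤ M k / M₀ k :=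
      Filter.Eventually.of_forall fun k => by
        rw [hr]
        have h1 := (hc_pos k).le
        have h2 : (0:ℝ) ≤ (k.factorial : ℝ) := Nat.cast_nonneg _
        exact div_nonneg (mul_nonneg h1 h2) (pow_nonneg hB_pos.le k)
    have hub : ∀ᶠ k in Filter.atTop,
        M k / M₀ k ≤ q ^ (k - N) * (c N * (N.factorial : ℝ) / B₁ ^ N) := by
      filter_upwards [Filter.eventually_ge_atTop N] with k hk
      rw [hr]
      have hkN : N + (k - N) = k := by omega
      have h1 := hgeo (k - N)
      rwa [hkN] at h1
    have hlim : Filter.Tendsto (fun k : ℕ => q ^ (k - N) * (c N * (N.factorial : ℝ) / B₁ ^ N))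
        Filter.atTop (nhds 0) := by
      have h1 : Filter.Tendsto (fun k : ℕ => q ^ (k - N)) Filter.atTop (nhds 0) :=
        (tendsto_pow_atTop_nhds_zero_of_lt_one hq0 hq1).comp (Filter.tendsto_sub_atTop_nat N)
      have h2 := h1.mul_const (c N * (N.factorial : ℝ) / B₁ ^ N)
      simpa using h2
    exact squeeze_zero' h0le hub hlim
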